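/- Let k ≥ 2 be an even integer and write k = 2^N · l with N ≥ 1 and l odd. Then the map ℝ² → ℝ² defined by (x₁, x₂) ↦ (x₁^l − x₂^l, ∏_{j=0}^{N−1} (x₁^(l·2^j) + x₂^(l·2^j))) is a bijection, and for all (x₁, x₂) ∈ ℝ² the product of its two coordinates equals x₁^k − x₂^k. -/

import Mathlib

open Finset Function

-- key factorization identity
lemma key_fact (N : ℕ) (z₁ z₂ : ℝ) :
    (z₁ - z₂) * ∏ j ∈ range N, (z₁ ^ (2 ^ j) + z₂ ^ (2 ^ j)) = z₁ ^ (2 ^ N) - z₂ ^ (2 ^ N) := by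
  induction N with
  | zero => simp
  | succ n ih =>
      rw [Finset.prod_range_succ, ← mul_assoc, ih]
      have : ∀ z : ℝ, z ^ (2 ^ (n + 1)) = (z ^ (2 ^ n)) ^ 2 := by
        intro z; rw [← pow_mul, pow_succ]
      rw [this z₁, this z₂]; ring

lemma surj_of_bounds {f : ℝ → ℝ} (hf : Continuous f)
    (h : ∀ c : ℝ, ∃ s t : ℝ, f s ≤ c ∧ c ≤ f t) : Surjective f := by
  intro c
  obtain ⟨s, t, h1, h2⟩ := h c
  obtain ⟨x, -, hx⟩ := intermediate_value_uIcc (f := f) (a := s) (b := t) hf.continuousOn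
    (Set.Icc_subset_uIcc ⟨h1, h2⟩)
  exact ⟨x, hx⟩

lemma odd_pow_bij {l : ℕ} (hl : Odd l) : Bijective (fun x : ℝ => x ^ l) := by
  have hl0 : l ≠ 0 := by rintro rfl; simp at hl
  refine ⟨(Odd.strictMono_pow hl).injective, surj_of_bounds (by continuity) fun c => ?_⟩
  set t : ℝ := max 1 (max c (-c)) with ht
  have ht1 : (1 : ℝ) ≤ t := le_max_left _ _
  have htl : t ≤ t ^ l := le_self_pow₀ ht1 hl0
  refine ⟨-t, t, ?_, ?_⟩
  · have : (-t) ^ l = -(t ^ l) := Odd.neg_pow hl t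
    rw [this]
    have : -c ≤ t := le_trans (le_max_right _ _) (le_max_right _ _)
    linarith
  · have : c ≤ t := le_trans (le_max_left _ _) (le_max_right _ _)
    linarith

-- monotone part: a > 0
lemma h_strictMono {M : ℕ} (hM : Even M) (hM2 : 2 ≤ M) {a : ℝ} (ha : 0 < a) :
    StrictMono (fun t : ℝ => (t + a) ^ M - t ^ M) := by
  have hmodd : Odd (M - 1) := Nat.Even.sub_odd (by omega) hM odd_one
  apply strictMono_of_deriv_pos
  intro x
  have h1 : HasDerivAt (fun t : ℝ => (t + a) ^ M) (M * (x + a) ^ (M - 1) * 1) x :=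
    ((hasDerivAt_id x).add_const a).pow M
  have h2 : HasDerivAt (fun t : ℝ => t ^ M) (M * x ^ (M - 1)) x := hasDerivAt_pow M x
  have h3 : deriv (fun t : ℝ => (t + a) ^ M - t ^ M) x = _ := (h1.sub h2).deriv
  rw [h3]
  have hlt : x ^ (M - 1) < (x + a) ^ (M - 1) := Odd.strictMono_pow hmodd (by linarith)
  have hM0 : (0 : ℝ) < (M : ℝ) := by exact_mod_cast by omega
  nlinarith

lemma h_upper {M : ℕ} (hM2 : 2 ≤ M) {a : ℝ} (ha : 0 < a) (c : ℝ) :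
    ∃ t : ℝ, c ≤ (t + a) ^ M - t ^ M := by
  set t : ℝ := max 1 (c / a) with htdef
  have ht1 : (1 : ℝ) ≤ t := le_max_left _ _
  have ht0 : (0 : ℝ) ≤ t := by linarith
  have hMs : M - 1 + 1 = M := by omega
  refine ⟨t, ?_⟩
  have h1 : t ^ (M - 1) * (t + a) ≤ (t + a) ^ (M - 1) * (t + a) := by
    gcongr
    linarith
  have h2 : (t + a) ^ (M - 1) * (t + a) = (t + a) ^ M := by rw [← pow_succ, hMs]
  have h3 : t ^ (M - 1) * t = t ^ M := by rw [← pow_succ, hMs]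
  have h4 : t ≤ t ^ (M - 1) := le_self_pow₀ ht1 (by omega)
  have h5 : a * t ≤ a * t ^ (M - 1) := by nlinarith
  have h6 : c ≤ a * t := by
    rw [← div_le_iff₀' ha]
    exact le_max_right _ _
  nlinarith [h1, h2, h3]

lemma h_bij_pos {M : ℕ} (hM : Even M) (hM2 : 2 ≤ M) {a : ℝ} (hpos : 0 < a) :
    Bijective (fun t : ℝ => (t + a) ^ M - t ^ M) := by
  constructor
  · exact (h_strictMono hM hM2 hpos).injective
  · apply surj_of_bounds (by continuity)
    intro c
    obtain ⟨t, ht⟩ := h_upper hM2 hpos c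
    obtain ⟨s, hs⟩ := h_upper hM2 hpos (-c)
    refine ⟨-s - a, t, ?_, ht⟩
    have h1 : (-s - a + a) ^ M = s ^ M := by rw [show -s - a + a = -s by ring, hM.neg_pow]
    have h2 : (-s - a) ^ M = (s + a) ^ M := by
      rw [show -s - a = -(s + a) by ring, hM.neg_pow]
    rw [h1, h2]
    linarith

lemma h_bij {M : ℕ} (hM : Even M) (hM2 : 2 ≤ M) {a : ℝ} (ha : a ≠ 0) :
    Bijective (fun t : ℝ => (t + a) ^ M - t ^ M) := by
  rcases lt_or_gt_of_ne ha with hneg | hpos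
  · have hb := h_bij_pos hM hM2 (a := -a) (by linarith)
    have heq : (fun t : ℝ => (t + a) ^ M - t ^ M)
        = (fun x : ℝ => -x) ∘ (fun t : ℝ => (t + -a) ^ M - t ^ M) ∘ (fun t : ℝ => t + a) := by
      funext t; simp only [Function.comp_apply]; ring
    rw [heq]
    exact (neg_involutive.bijective.comp hb).comp (Equiv.addRight a).bijective
  · exact h_bij_pos hM hM2 hpos

lemma sum_two_pow (N : ℕ) : ∑ j ∈ range N, 2 ^ j = 2 ^ N - 1 := by
  induction N with
  | zero => simp
  | succ n ih =>
      rw [Finset.sum_range_succ, ih]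
      have := Nat.one_le_two_pow (n := n)
      have : 2 ^ (n + 1) = 2 * 2 ^ n := by ring
      omega

lemma g_bij (N : ℕ) (hN : 1 ≤ N) (a : ℝ) :
    Bijective (fun t : ℝ => ∏ j ∈ range N, ((t + a) ^ (2 ^ j) + t ^ (2 ^ j))) := by
  have hMev : Even (2 ^ N) := (Nat.even_pow).mpr ⟨even_two, by omega⟩
  have hM2 : 2 ≤ 2 ^ N := by
    calc 2 = 2 ^ 1 := by norm_num
    _ ≤ 2 ^ N := Nat.pow_le_pow_right (by norm_num) hN
  rcases eq_or_ne a 0 with rfl | ha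
  · have heq : (fun t : ℝ => ∏ j ∈ range N, ((t + 0) ^ (2 ^ j) + t ^ (2 ^ j)))
        = fun t : ℝ => ((2 : ℝ) ^ N * t ^ (2 ^ N - 1)) := by
      funext t
      calc ∏ j ∈ range N, ((t + 0) ^ (2 ^ j) + t ^ (2 ^ j))
          = ∏ j ∈ range N, (2 * t ^ (2 ^ j)) :=
            Finset.prod_congr rfl (fun j _ => by rw [add_zero]; ring)
        _ = (2 : ℝ) ^ N * t ^ (2 ^ N - 1) := by
            rw [Finset.prod_mul_distrib, Finset.prod_const, Finset.prod_pow_eq_pow_sum,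
              sum_two_pow, Finset.card_range]
    rw [heq]
    have h2 : Bijective (fun x : ℝ => (2 : ℝ) ^ N * x) :=
      (Equiv.mulLeft₀ ((2 : ℝ) ^ N) (by positivity)).bijective
    have hodd : Odd (2 ^ N - 1) := Nat.Even.sub_odd Nat.one_le_two_pow hMev odd_one
    exact h2.comp (odd_pow_bij hodd)
  · have heq : (fun t : ℝ => ∏ j ∈ range N, ((t + a) ^ (2 ^ j) + t ^ (2 ^ j)))
        = (fun x : ℝ => a⁻¹ * x) ∘ (fun t : ℝ => (t + a) ^ (2 ^ N) - t ^ (2 ^ N)) := by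
      funext t
      simp only [Function.comp_apply]
      have hk := key_fact N (t + a) t
      rw [show t + a - t = a by ring] at hk
      rw [← hk, inv_mul_cancel_left₀ ha]
    rw [heq]
    exact (Equiv.mulLeft₀ a⁻¹ (inv_ne_zero ha)).bijective.comp (h_bij hMev hM2 ha)

lemma G_bij (N : ℕ) (hN : 1 ≤ N) :
    Bijective (fun z : ℝ × ℝ =>
      (z.1 - z.2, ∏ j ∈ range N, (z.1 ^ (2 ^ j) + z.2 ^ (2 ^ j)))) := by
  constructor
  · rintro ⟨x1, x2⟩ ⟨y1, y2⟩ h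
    simp only [Prod.mk.injEq] at h ⊢
    obtain ⟨h1, h2⟩ := h
    set a := x1 - x2 with ha
    have hx1 : x1 = x2 + a := by rw [ha]; ring
    have hy1 : y1 = y2 + a := by rw [ha]; linarith
    rw [hx1, hy1] at h2
    have := (g_bij N hN a).injective h2
    constructor
    · rw [hx1, hy1, this]
    · exact this
  · rintro ⟨a, b⟩
    obtain ⟨t, ht⟩ := (g_bij N hN a).surjective b
    exact ⟨(t + a, t), by simp [ht]⟩

/-- For an even `k = 2^N · l ≥ 2` with `N ≥ 1` and `l` odd, the map
`(x₁, x₂) ↦ (x₁^l − x₂^l, ∏_{j=0}^{N−1} (x₁^(l·2^j) + x₂^(l·2^j)))` is a bijection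
of `ℝ²`, and the product of its two coordinates equals `x₁^k − x₂^k`. -/
theorem bijective_factorization_even_pow (k N l : ℕ) (hk : 2 ≤ k) (hke : Even k)
    (hN : 1 ≤ N) (hl : Odd l) (hkl : k = 2 ^ N * l) :
    Function.Bijective (fun p : ℝ × ℝ =>
      (p.1 ^ l - p.2 ^ l,
        ∏ j ∈ Finset.range N, (p.1 ^ (l * 2 ^ j) + p.2 ^ (l * 2 ^ j)))) ∧
    ∀ p : ℝ × ℝ,
      (p.1 ^ l - p.2 ^ l) *
          ∏ j ∈ Finset.range N, (p.1 ^ (l * 2 ^ j) + p.2 ^ (l * 2 ^ j)) =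
        p.1 ^ k - p.2 ^ k := by
  have hrw : ∀ p : ℝ × ℝ, ∏ j ∈ Finset.range N, (p.1 ^ (l * 2 ^ j) + p.2 ^ (l * 2 ^ j))
      = ∏ j ∈ Finset.range N, ((p.1 ^ l) ^ (2 ^ j) + (p.2 ^ l) ^ (2 ^ j)) := by
    intro p
    exact Finset.prod_congr rfl (fun j _ => by rw [← pow_mul, ← pow_mul])
  constructor
  · have heq : (fun p : ℝ × ℝ =>
        (p.1 ^ l - p.2 ^ l,
          ∏ j ∈ Finset.range N, (p.1 ^ (l * 2 ^ j) + p.2 ^ (l * 2 ^ j))))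
        = (fun z : ℝ × ℝ => (z.1 - z.2, ∏ j ∈ Finset.range N, (z.1 ^ (2 ^ j) + z.2 ^ (2 ^ j))))
          ∘ (fun p : ℝ × ℝ => (p.1 ^ l, p.2 ^ l)) := by
      funext p
      simp only [Function.comp_apply]
      rw [hrw p]
    rw [heq]
    have hQ : Function.Bijective (fun p : ℝ × ℝ => (p.1 ^ l, p.2 ^ l)) :=
      Function.Bijective.prodMap (odd_pow_bij hl) (odd_pow_bij hl)
    exact (G_bij N hN).comp hQ
  · intro p
    rw [hrw p]
    have := key_fact N (p.1 ^ l) (p.2 ^ l)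
    rw [← pow_mul, ← pow_mul, mul_comm l (2 ^ N), ← hkl] at this
    exact this
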